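/- Let z denote the element of the plactic monoid M represented by the word cba. Then z lies in the center of M (z * w = w * z for every w ∈ M), and moreover the center of M equals the submonoid generated by z: Submonoid.center M = Submonoid.closure {z}. -/

import Mathlib

namespace Plactic

/-- The generator `a`. -/
def a : FreeMonoid (Fin 3) := FreeMonoid.of 0
/-- The generator `b`. -/
def b : FreeMonoid (Fin 3) := FreeMonoid.of 1
/-- The generator `c`. -/
def c : FreeMonoid (Fin 3) := FreeMonoid.of 2

/-- The eight Knuth relations on three generators. -/
inductive KnuthRel : FreeMonoid (Fin 3) → FreeMonoid (Fin 3) → Prop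
  | aba : KnuthRel (a * b * a) (b * a * a)
  | bab : KnuthRel (b * a * b) (b * b * a)
  | aca : KnuthRel (a * c * a) (c * a * a)
  | cac : KnuthRel (c * a * c) (c * c * a)
  | cbb : KnuthRel (c * b * b) (b * c * b)
  | cbc : KnuthRel (c * b * c) (c * c * b)
  | bac : KnuthRel (b * a * c) (b * c * a)
  | acb : KnuthRel (a * c * b) (c * a * b)

/-- The plactic congruence: the congruence generated by the Knuth relations. -/
def placticCon : Con (FreeMonoid (Fin 3)) := conGen KnuthRel

/-- The plactic monoid with three generators. -/
abbrev M := placticCon.Quotient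

/-- The natural projection from the free monoid onto the plactic monoid. -/
def mk : FreeMonoid (Fin 3) →* M := placticCon.mk'

/-- The congruence on `M` generated by the pair `(ac, ca)`. -/
def con1 : Con M := conGen (fun x y => x = mk (a * c) ∧ y = mk (c * a))

/-- `N1 = M/(ac = ca)`. -/
abbrev N1 := con1.Quotient

/-- The congruence on `M` generated by the pair `(bacb, cbab)`. -/
def con2 : Con M := conGen (fun x y => x = mk (b * a * c * b) ∧ y = mk (c * b * a * b))

/-- The grammic monoid `N2 = M/(bacb = cbab)`. -/
abbrev N2 := con2.Quotient


@[ext] structure Tab where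
  p : ℕ
  q : ℕ
  r : ℕ
  s : ℕ
  t : ℕ
  u : ℕ
deriving DecidableEq

def ins : Fin 3 → Tab → Tab
  | 0, ⟨p, q, r, s, t, u⟩ =>
    match t, r, u with
    | t+1, r+1, u => ⟨p+1, q+1, r, s+1, t, u⟩
    | t+1, 0, u => ⟨p, q+1, 0, s+1, t, u⟩
    | 0, r, u+1 => ⟨p, q, r+1, s+1, 0, u⟩
    | 0, r, 0 => ⟨p, q, r, s+1, 0, 0⟩
  | 1, ⟨p, q, r, s, t, u⟩ =>
    match u with
    | u+1 => ⟨p, q, r+1, s, t+1, u⟩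
    | 0 => ⟨p, q, r, s, t+1, 0⟩
  | 2, ⟨p, q, r, s, t, u⟩ => ⟨p, q, r, s, t, u+1⟩

lemma ins_a11 (p q r s t u) : ins 0 ⟨p, q, r+1, s, t+1, u⟩ = ⟨p+1, q+1, r, s+1, t, u⟩ := rfl
lemma ins_a10 (p q s t u) : ins 0 ⟨p, q, 0, s, t+1, u⟩ = ⟨p, q+1, 0, s+1, t, u⟩ := rfl
lemma ins_a01 (p q r s u) : ins 0 ⟨p, q, r, s, 0, u+1⟩ = ⟨p, q, r+1, s+1, 0, u⟩ := rfl
lemma ins_a00 (p q r s) : ins 0 ⟨p, q, r, s, 0, 0⟩ = ⟨p, q, r, s+1, 0, 0⟩ := rfl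
lemma ins_b1 (p q r s t u) : ins 1 ⟨p, q, r, s, t, u+1⟩ = ⟨p, q, r+1, s, t+1, u⟩ := rfl
lemma ins_b0 (p q r s t) : ins 1 ⟨p, q, r, s, t, 0⟩ = ⟨p, q, r, s, t+1, 0⟩ := rfl
lemma ins_c (p q r s t u) : ins 2 ⟨p, q, r, s, t, u⟩ = ⟨p, q, r, s, t, u+1⟩ := rfl

def insWord (w : FreeMonoid (Fin 3)) (T : Tab) : Tab :=
  (FreeMonoid.toList w).foldl (fun T x => ins x T) T

lemma insWord_mul (v w : FreeMonoid (Fin 3)) (T : Tab) :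
    insWord (v * w) T = insWord w (insWord v T) := by
  simp [insWord, FreeMonoid.toList_mul, List.foldl_append]

lemma insWord_of (x : Fin 3) (T : Tab) : insWord (FreeMonoid.of x) T = ins x T := rfl

lemma knuth_ins {x y : FreeMonoid (Fin 3)} (h : KnuthRel x y) (T : Tab) :
    insWord x T = insWord y T := by
  obtain ⟨p, q, r, s, t, u⟩ := T
  cases h <;> simp only [a, b, c, insWord_mul, insWord_of] <;>
    obtain _|(_|t) := t <;> obtain _|(_|u) := u <;> obtain _|(_|r) := r <;> rfl

def tabCon : Con (FreeMonoid (Fin 3)) where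
  r x y := ∀ T, insWord x T = insWord y T
  iseqv := ⟨fun _ _ => rfl, fun h T => (h T).symm, fun h1 h2 T => (h1 T).trans (h2 T)⟩
  mul' := by
    intro w x y z h1 h2 T
    rw [insWord_mul, insWord_mul, h1, h2]

lemma nf_eq_of_mk_eq {x y : FreeMonoid (Fin 3)} (h : mk x = mk y) (T : Tab) :
    insWord x T = insWord y T :=
  Con.le_def.mp ((Con.conGen_le (c := tabCon)).mpr (by intro x y h; exact knuth_ins h)) (placticCon.eq.mp h) T



/- ## M-level computations -/

lemma krel {x y : FreeMonoid (Fin 3)} (h : KnuthRel x y) : mk x = mk y :=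
  placticCon.eq.mpr (ConGen.Rel.of _ _ h)

local notation "A" => mk a
local notation "B" => mk b
local notation "C" => mk c

lemma tail3 {x1 x2 x3 y1 y2 y3 : M} (h : x1 * x2 * x3 = y1 * y2 * y3) (w : M) :
    x1 * (x2 * (x3 * w)) = y1 * (y2 * (y3 * w)) := by
  rw [← mul_assoc, ← mul_assoc, h, mul_assoc, mul_assoc]

lemma k_aba (w : M) : A * (B * (A * w)) = B * (A * (A * w)) := by
  refine tail3 ?_ w
  have := krel KnuthRel.aba; simpa [map_mul] using this

lemma k_bab (w : M) : B * (A * (B * w)) = B * (B * (A * w)) := by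
  refine tail3 ?_ w
  have := krel KnuthRel.bab; simpa [map_mul] using this

lemma k_aca (w : M) : A * (C * (A * w)) = C * (A * (A * w)) := by
  refine tail3 ?_ w
  have := krel KnuthRel.aca; simpa [map_mul] using this

lemma k_cac (w : M) : C * (A * (C * w)) = C * (C * (A * w)) := by
  refine tail3 ?_ w
  have := krel KnuthRel.cac; simpa [map_mul] using this

lemma k_cbb (w : M) : C * (B * (B * w)) = B * (C * (B * w)) := by
  refine tail3 ?_ w
  have := krel KnuthRel.cbb; simpa [map_mul] using this

lemma k_cbc (w : M) : C * (B * (C * w)) = C * (C * (B * w)) := by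
  refine tail3 ?_ w
  have := krel KnuthRel.cbc; simpa [map_mul] using this

lemma k_bac (w : M) : B * (A * (C * w)) = B * (C * (A * w)) := by
  refine tail3 ?_ w
  have := krel KnuthRel.bac; simpa [map_mul] using this

lemma k_acb (w : M) : A * (C * (B * w)) = C * (A * (B * w)) := by
  refine tail3 ?_ w
  have := krel KnuthRel.acb; simpa [map_mul] using this

lemma pm (x : M) (n : ℕ) (w : M) : x ^ (n + 1) * w = x * (x ^ n * w) := by
  rw [pow_succ', mul_assoc]

lemma pm2 (x : M) (n : ℕ) (w : M) : x ^ (n + 1) * w = x ^ n * (x * w) := by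
  rw [pow_succ, mul_assoc]

/-- `C^(n+1) (B w) = C (B (C^n w))`. -/
lemma H1 (n : ℕ) (w : M) : C ^ (n+1) * (B * w) = C * (B * (C ^ n * w)) := by
  induction n generalizing w with
  | zero => simp
  | succ n ih =>
      rw [pm, ih, ← k_cbc, ← pm]

/-- `C^(n+1) (A w) = C (A (C^n w))`. -/
lemma H2 (n : ℕ) (w : M) : C ^ (n+1) * (A * w) = C * (A * (C ^ n * w)) := by
  induction n generalizing w with
  | zero => simp
  | succ n ih =>
      rw [pm, ih, ← k_cac, ← pm]

/-- `B^(n+1) (A w) = B (A (B^n w))`. -/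
lemma H3 (n : ℕ) (w : M) : B ^ (n+1) * (A * w) = B * (A * (B ^ n * w)) := by
  induction n generalizing w with
  | zero => simp
  | succ n ih =>
      rw [pm, ih, ← k_bab, ← pm]

/-- `B^n (C (B w)) = C (B^(n+1) w)`. -/
lemma H4 (n : ℕ) (w : M) : B ^ n * (C * (B * w)) = C * (B ^ (n+1) * w) := by
  induction n generalizing w with
  | zero => simp [pm]
  | succ n ih =>
      rw [pm, ih, pm B n w, ← k_cbb, ← pm B n, ← pm B (n+1)]

/-- `A^n (C (A w)) = C (A^(n+1) w)`. -/
lemma H5 (n : ℕ) (w : M) : A ^ n * (C * (A * w)) = C * (A ^ (n+1) * w) := by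
  induction n generalizing w with
  | zero => simp [pm]
  | succ n ih =>
      rw [pm, ih, pm A n w, k_aca, ← pm A n, ← pm A (n+1)]

/-- `A^n (C (B w)) = C (A^n (B w))`. -/
lemma H6 (n : ℕ) (w : M) : A ^ n * (C * (B * w)) = C * (A ^ n * (B * w)) := by
  cases n with
  | zero => simp
  | succ n =>
      rw [pm2, k_acb, H5]

/-- `A^n (B (A w)) = B (A^(n+1) w)`. -/
lemma H7 (n : ℕ) (w : M) : A ^ n * (B * (A * w)) = B * (A ^ (n+1) * w) := by
  induction n generalizing w with
  | zero => simp [pm]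
  | succ n ih =>
      rw [pm, ih, pm A n w, k_aba, ← pm A n, ← pm A (n+1)]

/-- `B^(n+1) (C (A w)) = B^(n+1) (A (C w))`. -/
lemma H8 (n : ℕ) (w : M) : B ^ (n+1) * (C * (A * w)) = B ^ (n+1) * (A * (C * w)) := by
  induction n generalizing w with
  | zero => simpa using (k_bac w).symm
  | succ n ih =>
      rw [pm, ih, ← pm]

lemma hC_B (n : ℕ) : C ^ (n+1) * B = C * (B * C ^ n) := by
  have := H1 n 1; simpa using this

lemma hC_A (n : ℕ) : C ^ (n+1) * A = C * (A * C ^ n) := by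
  have := H2 n 1; simpa using this

lemma hB_A (n : ℕ) : B ^ (n+1) * A = B * (A * B ^ n) := by
  have := H3 n 1; simpa using this




def wordOf (T : Tab) : FreeMonoid (Fin 3) :=
  c ^ T.p * (b ^ T.q * (c ^ T.r * (a ^ T.s * (b ^ T.t * c ^ T.u))))

lemma row1A (s t u : ℕ) :
    A ^ s * (B ^ (t+1) * (C ^ u * A)) = B * (A ^ (s+1) * (B ^ t * C ^ u)) := by
  cases u with
  | zero =>
      simp only [pow_zero, one_mul, mul_one]
      rw [hB_A t, H7 s]
  | succ u =>
      rw [hC_A u, H8 t, ← pow_succ', H3 t, H7 s]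

lemma mkIns_c (p q r s t u : ℕ) :
    mk (wordOf ⟨p,q,r,s,t,u⟩ * c) = mk (wordOf ⟨p,q,r,s,t,u+1⟩) := by
  simp only [wordOf, map_mul, map_pow, mul_assoc]
  rw [← pow_succ]

lemma mkIns_b0 (p q r s t : ℕ) :
    mk (wordOf ⟨p,q,r,s,t,0⟩ * b) = mk (wordOf ⟨p,q,r,s,t+1,0⟩) := by
  simp only [wordOf, map_mul, map_pow, mul_assoc, pow_zero, one_mul, mul_one]
  rw [← pow_succ]

lemma mkIns_b1 (p q r s t u : ℕ) :
    mk (wordOf ⟨p,q,r,s,t,u+1⟩ * b) = mk (wordOf ⟨p,q,r+1,s,t+1,u⟩) := by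
  simp only [wordOf, map_mul, map_pow, mul_assoc]
  rw [hC_B u, H4 t, pm (B) t, H6 s, ← pm (B) t, ← pm2 (C) r]

lemma mkIns_a00 (p q r s : ℕ) :
    mk (wordOf ⟨p,q,r,s,0,0⟩ * a) = mk (wordOf ⟨p,q,r,s+1,0,0⟩) := by
  simp only [wordOf, map_mul, map_pow, mul_assoc, pow_zero, one_mul, mul_one]
  rw [← pow_succ]

lemma mkIns_a01 (p q r s u : ℕ) :
    mk (wordOf ⟨p,q,r,s,0,u+1⟩ * a) = mk (wordOf ⟨p,q,r+1,s+1,0,u⟩) := by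
  simp only [wordOf, map_mul, map_pow, mul_assoc, pow_zero, one_mul, mul_one]
  rw [hC_A u, H5 s, ← pm2 (C) r]

lemma mkIns_a10 (p q s t u : ℕ) :
    mk (wordOf ⟨p,q,0,s,t+1,u⟩ * a) = mk (wordOf ⟨p,q+1,0,s+1,t,u⟩) := by
  simp only [wordOf, map_mul, map_pow, mul_assoc]
  rw [row1A]
  simp only [pow_zero, one_mul]
  rw [← pm2 (B) q]

lemma mkIns_a11 (p q r s t u : ℕ) :
    mk (wordOf ⟨p,q,r+1,s,t+1,u⟩ * a) = mk (wordOf ⟨p+1,q+1,r,s+1,t,u⟩) := by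
  simp only [wordOf, map_mul, map_pow, mul_assoc]
  rw [row1A, H1 r, H4 q, ← pm2 (C) p]

lemma mkIns (x : Fin 3) (T : Tab) :
    mk (wordOf T * FreeMonoid.of x) = mk (wordOf (ins x T)) := by
  obtain ⟨p, q, r, s, t, u⟩ := T
  fin_cases x
  · obtain _|t := t
    · obtain _|u := u
      · exact mkIns_a00 p q r s
      · exact mkIns_a01 p q r s u
    · obtain _|r := r
      · exact mkIns_a10 p q s t u
      · exact mkIns_a11 p q r s t u
  · obtain _|u := u
    · exact mkIns_b0 p q r s t
    · exact mkIns_b1 p q r s t u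
  · exact mkIns_c p q r s t u




def emptyT : Tab := ⟨0, 0, 0, 0, 0, 0⟩

def nf (w : FreeMonoid (Fin 3)) : Tab := insWord w emptyT

lemma insWord_one (T : Tab) : insWord 1 T = T := rfl
lemma insWord_a (T : Tab) : insWord a T = ins 0 T := rfl
lemma insWord_b (T : Tab) : insWord b T = ins 1 T := rfl
lemma insWord_c (T : Tab) : insWord c T = ins 2 T := rfl

lemma mk_wordOf_insWord (l : List (Fin 3)) : ∀ T : Tab,
    mk (wordOf (insWord (FreeMonoid.ofList l) T)) = mk (wordOf T) * mk (FreeMonoid.ofList l) := by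
  induction l with
  | nil =>
      intro T
      rw [show FreeMonoid.ofList ([] : List (Fin 3)) = 1 from rfl, insWord_one, map_one, mul_one]
  | cons x l ih =>
      intro T
      have hx : FreeMonoid.ofList (x :: l) = FreeMonoid.of x * FreeMonoid.ofList l := rfl
      rw [hx, insWord_mul, insWord_of, ih, ← mkIns, map_mul, map_mul, mul_assoc]

lemma mk_wordOf_insWord' (w : FreeMonoid (Fin 3)) (T : Tab) :
    mk (wordOf (insWord w T)) = mk (wordOf T) * mk w := by
  have := mk_wordOf_insWord (FreeMonoid.toList w) T
  rwa [FreeMonoid.ofList_toList] at this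

lemma wordOf_empty : wordOf emptyT = 1 := by simp [wordOf, emptyT]

lemma mk_nf (w : FreeMonoid (Fin 3)) : mk (wordOf (nf w)) = mk w := by
  have := mk_wordOf_insWord' w emptyT
  simpa [wordOf_empty, nf] using this

lemma mk_eq_iff_nf {x y : FreeMonoid (Fin 3)} : mk x = mk y ↔ nf x = nf y :=
  ⟨fun h => nf_eq_of_mk_eq h emptyT, fun h => by rw [← mk_nf x, ← mk_nf y]; exact congrArg _ (congrArg _ h)⟩

/- ## centrality of cba -/

lemma z_comm_letter (x : Fin 3) :
    mk (c * b * a) * mk (FreeMonoid.of x) = mk (FreeMonoid.of x) * mk (c * b * a) := by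
  rw [← map_mul, ← map_mul]
  apply mk_eq_iff_nf.2
  fin_cases x <;> decide

lemma z_central (w : M) : mk (c * b * a) * w = w * mk (c * b * a) := by
  refine Con.induction_on w fun v => ?_
  show mk (c * b * a) * mk v = mk v * mk (c * b * a)
  refine FreeMonoid.recOn v ?_ ?_
  · simp
  · intro x xs ih
    rw [map_mul mk (FreeMonoid.of x) xs, ← mul_assoc, z_comm_letter, mul_assoc, ih, mul_assoc]
    rw [← mul_assoc]

/- ## closed forms for inserting powers -/

lemma insWord_c_pow (n : ℕ) : ∀ T : Tab,
    insWord (c ^ n) T = ⟨T.p, T.q, T.r, T.s, T.t, T.u + n⟩ := by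
  induction n with
  | zero => intro T; rw [pow_zero, insWord_one]; apply Tab.ext <;> simp
  | succ n ih =>
      intro T; obtain ⟨p, q, r, s, t, u⟩ := T
      rw [pow_succ', insWord_mul, insWord_c, ins_c, ih]
      apply Tab.ext <;> simp <;> omega

lemma insWord_b_pow (n : ℕ) : ∀ T : Tab,
    insWord (b ^ n) T = ⟨T.p, T.q, T.r + min n T.u, T.s, T.t + n, T.u - n⟩ := by
  induction n with
  | zero => intro T; rw [pow_zero, insWord_one]; apply Tab.ext <;> simp
  | succ n ih =>
      intro T; obtain ⟨p, q, r, s, t, u⟩ := T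
      rw [pow_succ', insWord_mul, insWord_b]
      obtain _|u := u
      · rw [ins_b0, ih]; apply Tab.ext <;> simp <;> omega
      · rw [ins_b1, ih]; apply Tab.ext <;> simp <;> omega

lemma insWord_a_pow (n : ℕ) : ∀ T : Tab,
    insWord (a ^ n) T = ⟨T.p + min (min n T.t) T.r, T.q + min n T.t,
      (T.r - min n T.t) + min (n - T.t) T.u, T.s + n, T.t - n, T.u - (n - T.t)⟩ := by
  induction n with
  | zero => intro T; rw [pow_zero, insWord_one]; apply Tab.ext <;> simp
  | succ n ih =>
      intro T; obtain ⟨p, q, r, s, t, u⟩ := T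
      rw [pow_succ', insWord_mul, insWord_a]
      obtain _|t := t
      · obtain _|u := u
        · rw [ins_a00, ih]; apply Tab.ext <;> simp <;> omega
        · rw [ins_a01, ih]; apply Tab.ext <;> simp <;> omega
      · obtain _|r := r
        · rw [ins_a10, ih]; apply Tab.ext <;> simp <;> omega
        · rw [ins_a11, ih]; apply Tab.ext <;> simp <;> omega

/- ## validity -/

def Valid (T : Tab) : Prop := T.p ≤ T.q ∧ T.q ≤ T.s ∧ T.q + T.r ≤ T.s + T.t

lemma valid_ins0 (T : Tab) (h : Valid T) : Valid (ins 0 T) := by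
  obtain ⟨p, q, r, s, t, u⟩ := T
  obtain _|t := t <;> obtain _|u := u <;> obtain _|r := r <;>
    simp only [ins_a00, ins_a01, ins_a10, ins_a11, Valid] at h ⊢ <;> omega

lemma valid_ins1 (T : Tab) (h : Valid T) : Valid (ins 1 T) := by
  obtain ⟨p, q, r, s, t, u⟩ := T
  obtain _|u := u <;>
    simp only [ins_b0, ins_b1, Valid] at h ⊢ <;> omega

lemma valid_ins2 (T : Tab) (h : Valid T) : Valid (ins 2 T) := by
  obtain ⟨p, q, r, s, t, u⟩ := T
  simp only [ins_c, Valid] at h ⊢; omega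

lemma valid_ins (x : Fin 3) (T : Tab) (h : Valid T) : Valid (ins x T) := by
  fin_cases x
  exacts [valid_ins0 T h, valid_ins1 T h, valid_ins2 T h]

lemma valid_foldl (l : List (Fin 3)) : ∀ T : Tab, Valid T →
    Valid (List.foldl (fun T x => ins x T) T l) := by
  induction l with
  | nil => intro T h; exact h
  | cons x l ih => intro T h; exact ih _ (valid_ins x T h)

lemma valid_nf (w : FreeMonoid (Fin 3)) : Valid (nf w) :=
  valid_foldl (FreeMonoid.toList w) emptyT ⟨le_refl 0, le_refl 0, by simp [emptyT]⟩

/- ## the column powers -/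

lemma mkw_col (k : ℕ) : mk (wordOf ⟨k, k, 0, k, 0, 0⟩) = mk (c * b * a) ^ k := by
  induction k with
  | zero => simp [wordOf]
  | succ k ih =>
      have h1 : insWord (c * b * a) ⟨k, k, 0, k, 0, 0⟩ = ⟨k+1, k+1, 0, k+1, 0, 0⟩ := rfl
      rw [← h1, mk_wordOf_insWord', ih, pow_succ]



lemma insE0 : ins 0 emptyT = ⟨0, 0, 0, 1, 0, 0⟩ := rfl
lemma insE1 : ins 1 emptyT = ⟨0, 0, 0, 0, 1, 0⟩ := rfl
lemma insE2 : ins 2 emptyT = ⟨0, 0, 0, 0, 0, 1⟩ := rfl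

/-- The element `z = cba` lies in the center of the plactic monoid `M`, and the
center of `M` is exactly the submonoid generated by `z`. -/
theorem center_eq_closure_z :
    (∀ w : M, mk (c * b * a) * w = w * mk (c * b * a)) ∧
    Submonoid.center M = Submonoid.closure {mk (c * b * a)} := by
  refine ⟨z_central, le_antisymm ?_ ?_⟩
  · intro w hw
    obtain ⟨v, rfl⟩ := Con.mk'_surjective (c := placticCon) w
    have hvS : mk (wordOf (nf v)) = mk v := mk_nf v
    have hnfS : insWord (wordOf (nf v)) emptyT = nf v := mk_eq_iff_nf.mp hvS
    have hcomm : ∀ x : Fin 3, ins x (nf v) = insWord (wordOf (nf v)) (ins x emptyT) := by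
      intro x
      have h1 : mk (wordOf (nf v) * FreeMonoid.of x) = mk (FreeMonoid.of x * wordOf (nf v)) := by
        rw [map_mul, map_mul, hvS]
        exact (Submonoid.mem_center_iff.mp hw (mk (FreeMonoid.of x))).symm
      have h2 := nf_eq_of_mk_eq h1 emptyT
      rw [insWord_mul, insWord_mul, insWord_of, hnfS] at h2
      exact h2
    have hval : Valid (nf v) := valid_nf v
    have hx0 := hcomm 0
    have hx1 := hcomm 1
    have hx2 := hcomm 2
    obtain ⟨⟨p, q, r, s, t, u⟩, hS⟩ : ∃ S : Tab, S = nf v := ⟨_, rfl⟩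
    rw [← hS] at hx0 hx1 hx2 hval hvS
    simp only [wordOf, insWord_mul, insWord_a_pow, insWord_b_pow, insWord_c_pow,
      insE0, insE1, insE2] at hx0 hx1 hx2
    simp only [Valid] at hval
    have heq : (⟨p, q, r, s, t, u⟩ : Tab) = ⟨p, p, 0, p, 0, 0⟩ := by
      obtain _|t := t <;> obtain _|u := u <;> obtain _|r := r <;>
        simp only [ins_a00, ins_a01, ins_a10, ins_a11, ins_b0, ins_b1, ins_c,
          Tab.mk.injEq] at hx0 hx1 hx2 <;>
        (apply Tab.ext <;> simp <;> omega)
    have hvz : mk v = mk (c * b * a) ^ p := by rw [← hvS, heq, mkw_col]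
    show mk v ∈ Submonoid.closure {mk (c * b * a)}
    rw [hvz]
    exact pow_mem (Submonoid.subset_closure (Set.mem_singleton _)) p
  · refine Submonoid.closure_le.mpr ?_
    intro x hx
    rw [Set.mem_singleton_iff] at hx
    subst hx
    exact Submonoid.mem_center_iff.mpr fun g => (z_central g).symm

end Plactic
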